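/- The element t = ∑_{w ∈ S_k} T_w·T_{w⁻¹} lies in the center of A, i.e. t·x = x·t for every x ∈ A. -/

import Mathlib

/-- The number of inversions of a permutation `w` of `{0, …, k−1}`:
`ℓ(w) = #{(m,n) : m < n, w(m) > w(n)}`.  This equals the Coxeter length of `w`,
i.e. the minimal number of adjacent transpositions needed to express `w`. -/
def invNum {k : ℕ} (w : Equiv.Perm (Fin k)) : ℕ :=
  (Finset.univ.filter fun p : Fin k × Fin k => p.1 < p.2 ∧ w p.2 < w p.1).card

/-- `s` is one of the adjacent transpositions `s_i = (i, i+1)`. -/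
def IsAdjSwap {k : ℕ} (s : Equiv.Perm (Fin k)) : Prop :=
  ∃ (i : ℕ) (h : i + 1 < k), s = Equiv.swap ⟨i, Nat.lt_of_succ_lt h⟩ ⟨i + 1, h⟩

namespace HeckeAux

variable {k : ℕ}

/-- inversion set -/
def invSet (w : Equiv.Perm (Fin k)) : Finset (Fin k × Fin k) :=
  Finset.univ.filter fun p : Fin k × Fin k => p.1 < p.2 ∧ w p.2 < w p.1

lemma invNum_eq (w : Equiv.Perm (Fin k)) : invNum w = (invSet w).card := rfl

lemma mem_invSet {w : Equiv.Perm (Fin k)} {p : Fin k × Fin k} :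
    p ∈ invSet w ↔ p.1 < p.2 ∧ w p.2 < w p.1 := by
  simp [invSet]

lemma invNum_one : invNum (1 : Equiv.Perm (Fin k)) = 0 := by
  rw [invNum_eq, Finset.card_eq_zero, Finset.eq_empty_iff_forall_notMem]
  intro p hp
  rw [mem_invSet] at hp
  simp only [Equiv.Perm.one_apply] at hp
  exact absurd hp.1 (not_lt.2 hp.2.le)

/-- adjacent swap preserves order outside the special pair -/
lemma adjSwap_lt_iff {i : ℕ} (h : i + 1 < k) (x y : Fin k)
    (h1 : ¬(x = ⟨i, Nat.lt_of_succ_lt h⟩ ∧ y = ⟨i+1, h⟩))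
    (h2 : ¬(x = ⟨i+1, h⟩ ∧ y = ⟨i, Nat.lt_of_succ_lt h⟩)) :
    Equiv.swap ⟨i, Nat.lt_of_succ_lt h⟩ ⟨i+1, h⟩ x <
      Equiv.swap ⟨i, Nat.lt_of_succ_lt h⟩ ⟨i+1, h⟩ y ↔ x < y := by
  set a : Fin k := ⟨i, Nat.lt_of_succ_lt h⟩
  set b : Fin k := ⟨i+1, h⟩
  have hab : a ≠ b := by simp [a, b, Fin.ext_iff]
  rcases eq_or_ne x a with rfl | hxa
  · rcases eq_or_ne y a with rfl | hya
    · simp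
    · rcases eq_or_ne y b with rfl | hyb
      · exact absurd ⟨rfl, rfl⟩ h1
      · rw [Equiv.swap_apply_left, Equiv.swap_apply_of_ne_of_ne hya hyb]
        simp only [Fin.lt_def, a, b] at *
        have : y.val ≠ i + 1 := fun hc => hyb (Fin.ext hc)
        have : y.val ≠ i := fun hc => hya (Fin.ext hc)
        omega
  · rcases eq_or_ne x b with rfl | hxb
    · rcases eq_or_ne y a with rfl | hya
      · exact absurd ⟨rfl, rfl⟩ h2
      · rcases eq_or_ne y b with rfl | hyb
        · simp
        · rw [Equiv.swap_apply_right, Equiv.swap_apply_of_ne_of_ne hya hyb]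
          simp only [Fin.lt_def, a, b] at *
          have : y.val ≠ i + 1 := fun hc => hyb (Fin.ext hc)
          have : y.val ≠ i := fun hc => hya (Fin.ext hc)
          omega
    · rw [Equiv.swap_apply_of_ne_of_ne hxa hxb]
      rcases eq_or_ne y a with rfl | hya
      · rw [Equiv.swap_apply_left]
        simp only [Fin.lt_def, a, b] at *
        have : x.val ≠ i + 1 := fun hc => hxb (Fin.ext hc)
        have : x.val ≠ i := fun hc => hxa (Fin.ext hc)
        omega
      · rcases eq_or_ne y b with rfl | hyb
        · rw [Equiv.swap_apply_right]
          simp only [Fin.lt_def, a, b] at *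
          have : x.val ≠ i + 1 := fun hc => hxb (Fin.ext hc)
          have : x.val ≠ i := fun hc => hxa (Fin.ext hc)
          omega
        · rw [Equiv.swap_apply_of_ne_of_ne hya hyb]

end HeckeAux

namespace HeckeAux
variable {k : ℕ}

lemma invNum_adjSwap_mul_of_lt {i : ℕ} (h : i + 1 < k) (w : Equiv.Perm (Fin k))
    (hmn : w⁻¹ ⟨i, Nat.lt_of_succ_lt h⟩ < w⁻¹ ⟨i+1, h⟩) :
    invNum (Equiv.swap ⟨i, Nat.lt_of_succ_lt h⟩ ⟨i+1, h⟩ * w) = invNum w + 1 := by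
  set a : Fin k := ⟨i, Nat.lt_of_succ_lt h⟩ with ha
  set b : Fin k := ⟨i+1, h⟩ with hb
  set s := Equiv.swap a b with hs
  set m := w⁻¹ a with hm
  set n := w⁻¹ b with hn
  have hwm : w m = a := w.apply_symm_apply a
  have hwn : w n = b := w.apply_symm_apply b
  have hba : ¬ (b < a) := by simp [ha, hb, Fin.lt_def]
  have hkey : invSet (s * w) = insert (m, n) (invSet w) := by
    ext p
    rw [mem_invSet, Finset.mem_insert, mem_invSet]
    simp only [Equiv.Perm.mul_apply]
    have cond1 : p.1 < p.2 → ¬(w p.2 = a ∧ w p.1 = b) := by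
      rintro h12 ⟨hx, hy⟩
      have h1 : p.1 = n := w.injective (hy.trans hwn.symm)
      have h2 : p.2 = m := w.injective (hx.trans hwm.symm)
      rw [h1, h2] at h12
      exact absurd (hmn.trans h12) (lt_irrefl _)
    constructor
    · rintro ⟨h12, hlt⟩
      by_cases hp : p = (m, n)
      · exact Or.inl hp
      · refine Or.inr ⟨h12, ?_⟩
        rw [← adjSwap_lt_iff h (w p.2) (w p.1) (cond1 h12) ?_]
        · exact hlt
        · rintro ⟨hx, hy⟩
          have h1 : p.1 = m := w.injective (hy.trans hwm.symm)
          have h2 : p.2 = n := w.injective (hx.trans hwn.symm)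
          exact hp (Prod.ext_iff.2 ⟨h1, h2⟩)
    · rintro (rfl | ⟨h12, hlt⟩)
      · refine ⟨hmn, ?_⟩
        simp only [hwm, hwn, hs]
        rw [Equiv.swap_apply_left, Equiv.swap_apply_right]
        simp [ha, hb, Fin.lt_def]
      · refine ⟨h12, ?_⟩
        rw [adjSwap_lt_iff h (w p.2) (w p.1) (cond1 h12) ?_]
        · exact hlt
        · rintro ⟨hx, hy⟩
          rw [hx, hy] at hlt
          exact hba hlt
  have hnotmem : (m, n) ∉ invSet w := by
    rw [mem_invSet]
    rintro ⟨-, hlt⟩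
    rw [hwm, hwn] at hlt
    exact hba hlt
  rw [invNum_eq, invNum_eq, hkey, Finset.card_insert_of_notMem hnotmem]

end HeckeAux

namespace HeckeAux
variable {k : ℕ}

lemma adjSwap_sq {s : Equiv.Perm (Fin k)} (hs : IsAdjSwap s) : s * s = 1 := by
  obtain ⟨i, h, rfl⟩ := hs
  exact Equiv.swap_mul_self _ _

lemma invNum_adjSwap_mul {s : Equiv.Perm (Fin k)} (hs : IsAdjSwap s) (w : Equiv.Perm (Fin k)) :
    invNum (s * w) = invNum w + 1 ∨ invNum w = invNum (s * w) + 1 := by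
  obtain ⟨i, h, rfl⟩ := hs
  set a : Fin k := ⟨i, Nat.lt_of_succ_lt h⟩ with ha
  set b : Fin k := ⟨i+1, h⟩ with hb
  set s := Equiv.swap a b with hs
  have hab : a ≠ b := by simp [ha, hb, Fin.ext_iff]
  have hne : w⁻¹ a ≠ w⁻¹ b := fun hc => hab (w⁻¹.injective hc)
  rcases lt_or_gt_of_ne hne with hlt | hgt
  · exact Or.inl (invNum_adjSwap_mul_of_lt h w hlt)
  · right
    have h1 : (s * w)⁻¹ a = w⁻¹ b := by
      rw [mul_inv_rev, Equiv.Perm.mul_apply]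
      congr 1
      rw [hs, Equiv.swap_inv, Equiv.swap_apply_left]
    have h2 : (s * w)⁻¹ b = w⁻¹ a := by
      rw [mul_inv_rev, Equiv.Perm.mul_apply]
      congr 1
      rw [hs, Equiv.swap_inv, Equiv.swap_apply_right]
    have := invNum_adjSwap_mul_of_lt h (s * w) (by rw [h1, h2]; exact hgt)
    rwa [← mul_assoc, ← hs, hs, Equiv.swap_mul_self, one_mul] at this

lemma invNum_inv (w : Equiv.Perm (Fin k)) : invNum w⁻¹ = invNum w := by
  rw [invNum_eq, invNum_eq]
  apply Finset.card_bij (fun p _ => (w⁻¹ p.2, w⁻¹ p.1))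
  · intro p hp
    rw [mem_invSet] at hp ⊢
    refine ⟨hp.2, ?_⟩
    simp only [← Equiv.Perm.mul_apply, mul_inv_cancel, inv_mul_cancel, Equiv.Perm.one_apply]
    exact hp.1
  · intro p hp p' hp' hEq
    simp only [Prod.mk.injEq] at hEq
    have h2 : p.2 = p'.2 := w⁻¹.injective hEq.1
    have h1 : p.1 = p'.1 := w⁻¹.injective hEq.2
    exact Prod.ext_iff.2 ⟨h1, h2⟩
  · intro q hq
    rw [mem_invSet] at hq
    refine ⟨(w q.2, w q.1), ?_, ?_⟩
    · rw [mem_invSet]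
      exact ⟨hq.2, by simpa using hq.1⟩
    · simp

lemma invNum_mul_le (x y : Equiv.Perm (Fin k)) :
    invNum (x * y) ≤ invNum x + invNum y := by
  rw [invNum_eq, invNum_eq, invNum_eq]
  have hsplit := Finset.card_inter_add_card_sdiff (invSet (x * y)) (invSet y)
  have h1 : (invSet (x * y) ∩ invSet y).card ≤ (invSet y).card :=
    Finset.card_le_card (Finset.inter_subset_right)
  have h2 : (invSet (x * y) \ invSet y).card ≤ (invSet x).card := by
    apply Finset.card_le_card_of_injOn (fun p => (y p.1, y p.2))
    · intro p hp
      rw [Finset.mem_coe, Finset.mem_sdiff, mem_invSet, mem_invSet] at hp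
      obtain ⟨⟨h12, hlt⟩, hnot⟩ := hp
      rw [Finset.mem_coe, mem_invSet]
      simp only [Equiv.Perm.mul_apply] at hlt
      refine ⟨?_, hlt⟩
      rcases lt_trichotomy (y p.1) (y p.2) with h | h | h
      · exact h
      · exact absurd (y.injective h) (ne_of_lt h12)
      · exact absurd ⟨h12, h⟩ hnot
    · intro p _ p' _ hEq
      simp only [Prod.mk.injEq] at hEq
      exact Prod.ext_iff.2 ⟨y.injective hEq.1, y.injective hEq.2⟩
  omega

lemma invNum_adjSwap {s : Equiv.Perm (Fin k)} (hs : IsAdjSwap s) : invNum s = 1 := by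
  obtain ⟨i, h, rfl⟩ := hs
  have := invNum_adjSwap_mul_of_lt h 1 (by simp [Fin.lt_def])
  rwa [mul_one, invNum_one] at this

lemma exists_adjSwap_descent {w : Equiv.Perm (Fin k)} (hw : w ≠ 1) :
    ∃ s : Equiv.Perm (Fin k), IsAdjSwap s ∧ invNum w = invNum (s * w) + 1 := by
  by_contra hcon
  push_neg at hcon
  have key : ∀ (i : ℕ) (h : i + 1 < k),
      w⁻¹ ⟨i, Nat.lt_of_succ_lt h⟩ < w⁻¹ ⟨i+1, h⟩ := by
    intro i h
    set a : Fin k := ⟨i, Nat.lt_of_succ_lt h⟩ with ha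
    set b : Fin k := ⟨i+1, h⟩ with hb
    set s := Equiv.swap a b with hs
    have hadj : IsAdjSwap s := ⟨i, h, rfl⟩
    have hne : w⁻¹ a ≠ w⁻¹ b := by
      intro hc
      have : a = b := w⁻¹.injective hc
      simp [ha, hb, Fin.ext_iff] at this
    rcases lt_or_gt_of_ne hne with hlt | hgt
    · exact hlt
    · exfalso
      rcases invNum_adjSwap_mul hadj w with hcase | hcase
      · -- increasing; but descent exists: contradiction with of_lt applied to s*w
        have h1 : (s * w)⁻¹ a = w⁻¹ b := by
          rw [mul_inv_rev, Equiv.Perm.mul_apply]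
          congr 1
          rw [hs, Equiv.swap_inv, Equiv.swap_apply_left]
        have h2 : (s * w)⁻¹ b = w⁻¹ a := by
          rw [mul_inv_rev, Equiv.Perm.mul_apply]
          congr 1
          rw [hs, Equiv.swap_inv, Equiv.swap_apply_right]
        have := invNum_adjSwap_mul_of_lt h (s * w) (by rw [h1, h2]; exact hgt)
        rw [← hs] at this
        rw [← mul_assoc, adjSwap_sq hadj, one_mul] at this
        omega
      · exact hcon s hadj hcase
  -- now w⁻¹ is strictly monotone, hence the identity
  have hmono : StrictMono (⇑w⁻¹) := by
    cases k with
    | zero => exact fun a => absurd a.2 (by omega)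
    | succ k' =>
      rw [Fin.strictMono_iff_lt_succ]
      intro i
      have h : i.val + 1 < k' + 1 := by omega
      have := key i.val h
      exact this
  have hid : ⇑w⁻¹ = id := by
    apply (hmono.range_inj strictMono_id).1
    rw [Set.range_id, Equiv.range_eq_univ]
  apply hw
  have : w⁻¹ = 1 := Equiv.ext fun x => by rw [show w⁻¹ x = id x from congrFun hid x]; rfl
  rw [← inv_inv w, this, inv_one]

lemma invNum_eq_zero_iff {w : Equiv.Perm (Fin k)} : invNum w = 0 ↔ w = 1 := by
  constructor
  · intro h0
    by_contra hw
    obtain ⟨s, -, hdesc⟩ := exists_adjSwap_descent hw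
    omega
  · rintro rfl; exact invNum_one

end HeckeAux

namespace HeckeAux

section Algebra

variable {k : ℕ} {q : ℂ} {A : Type} [Ring A] [Algebra ℂ A]
variable (T : Module.Basis (Equiv.Perm (Fin k)) ℂ A)

lemma coord_basis (u v : Equiv.Perm (Fin k)) :
    T.coord u (T v) = if v = u then 1 else 0 := by
  rw [Module.Basis.coord_apply, Module.Basis.repr_self, Finsupp.single_apply]

variable (hT1 : T 1 = 1)
variable (hTlt : ∀ s w : Equiv.Perm (Fin k), IsAdjSwap s → invNum w < invNum (s * w) →
      T s * T w = T (s * w))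
variable (hTgt : ∀ s w : Equiv.Perm (Fin k), IsAdjSwap s → invNum (s * w) < invNum w →
      T s * T w = (q - q⁻¹) • T w + T (s * w))

include hTlt in
lemma T_decomp {u : Equiv.Perm (Fin k)} (hu : u ≠ 1) :
    ∃ s u' : Equiv.Perm (Fin k), IsAdjSwap s ∧ u = s * u' ∧
      invNum u = invNum u' + 1 ∧ T u = T s * T u' := by
  obtain ⟨s, hs, hdesc⟩ := exists_adjSwap_descent hu
  refine ⟨s, s * u, hs, ?_, ?_, ?_⟩
  · rw [← mul_assoc, adjSwap_sq hs, one_mul]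
  · exact hdesc
  · have h2 : invNum (s * u) < invNum (s * (s * u)) := by
      rw [← mul_assoc, adjSwap_sq hs, one_mul]; omega
    have := hTlt s (s * u) hs h2
    rw [← mul_assoc, adjSwap_sq hs, one_mul] at this
    exact this.symm

include hT1 hTlt in
lemma prodT : ∀ (n : ℕ) (u v : Equiv.Perm (Fin k)), invNum u ≤ n →
    invNum (u * v) = invNum u + invNum v → T u * T v = T (u * v) := by
  intro n
  induction n with
  | zero =>
    intro u v hu _
    have : u = 1 := invNum_eq_zero_iff.1 (Nat.le_zero.1 hu)
    subst this
    rw [hT1, one_mul, one_mul]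
  | succ n ih =>
    intro u v hu hadd
    by_cases hu1 : u = 1
    · subst hu1; rw [hT1, one_mul, one_mul]
    · obtain ⟨s, u', hs, rfl, hlen, hTu⟩ := T_decomp T hTlt hu1
      have hu'le : invNum u' ≤ n := by omega
      have hle : invNum (u' * v) ≤ invNum u' + invNum v := invNum_mul_le u' v
      have hassoc : s * u' * v = s * (u' * v) := mul_assoc _ _ _
      have hcase := invNum_adjSwap_mul hs (u' * v)
      rw [← hassoc] at hcase
      have heq : invNum (u' * v) = invNum u' + invNum v := by omega
      have hIH := ih u' v hu'le heq
      rw [hTu, mul_assoc, hIH]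
      have hlt : invNum (u' * v) < invNum (s * (u' * v)) := by
        rw [← hassoc]; omega
      rw [hTlt s (u' * v) hs hlt, hassoc]

include hT1 hTlt in
lemma prodT' (u v : Equiv.Perm (Fin k))
    (h : invNum (u * v) = invNum u + invNum v) : T u * T v = T (u * v) :=
  prodT T hT1 hTlt (invNum u) u v le_rfl h

lemma adjSwap_inv {s : Equiv.Perm (Fin k)} (hs : IsAdjSwap s) : s⁻¹ = s :=
  inv_eq_of_mul_eq_one_left (adjSwap_sq hs)

lemma invNum_mul_adjSwap_right {s : Equiv.Perm (Fin k)} (hs : IsAdjSwap s)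
    (w : Equiv.Perm (Fin k)) : invNum (w * s) = invNum (s * w⁻¹) := by
  rw [← invNum_inv (w * s), mul_inv_rev, adjSwap_inv hs]

lemma rdichotomy {s : Equiv.Perm (Fin k)} (hs : IsAdjSwap s) (w : Equiv.Perm (Fin k)) :
    invNum (w * s) = invNum w + 1 ∨ invNum w = invNum (w * s) + 1 := by
  have := invNum_adjSwap_mul hs w⁻¹
  rw [← invNum_mul_adjSwap_right hs w, invNum_inv] at this
  exact this

include hT1 hTlt in
lemma TR1 {s : Equiv.Perm (Fin k)} (hs : IsAdjSwap s) (w : Equiv.Perm (Fin k))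
    (h : invNum (w * s) = invNum w + 1) : T w * T s = T (w * s) :=
  prodT' T hT1 hTlt w s (by rw [h, invNum_adjSwap hs])

include hT1 hTlt hTgt in
lemma TR2 {s : Equiv.Perm (Fin k)} (hs : IsAdjSwap s) (w : Equiv.Perm (Fin k))
    (h : invNum w = invNum (w * s) + 1) :
    T w * T s = (q - q⁻¹) • T w + T (w * s) := by
  set w' := w * s with hw'
  have hw : w' * s = w := by rw [hw', mul_assoc, adjSwap_sq hs, mul_one]
  have h1 : invNum (w' * s) = invNum w' + 1 := by rw [hw]; omega
  have hTw : T w' * T s = T w := by rw [TR1 T hT1 hTlt hs w' h1, hw]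
  have hss : T s * T s = (q - q⁻¹) • T s + 1 := by
    have : invNum (s * s) < invNum s := by
      rw [adjSwap_sq hs, invNum_one, invNum_adjSwap hs]; omega
    rw [hTgt s s hs this, adjSwap_sq hs, hT1]
  calc T w * T s = (T w' * T s) * T s := by rw [hTw]
    _ = T w' * (T s * T s) := by rw [mul_assoc]
    _ = T w' * ((q - q⁻¹) • T s + 1) := by rw [hss]
    _ = (q - q⁻¹) • (T w' * T s) + T w' := by
        rw [mul_add, mul_one, mul_smul_comm]
    _ = (q - q⁻¹) • T w + T (w * s) := by rw [hTw, ← hw']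

end Algebra

end HeckeAux

namespace HeckeAux
section Algebra2
variable {k : ℕ} {q : ℂ} {A : Type} [Ring A] [Algebra ℂ A]
variable (T : Module.Basis (Equiv.Perm (Fin k)) ℂ A)
variable (hT1 : T 1 = 1)
variable (hTlt : ∀ s w : Equiv.Perm (Fin k), IsAdjSwap s → invNum w < invNum (s * w) →
      T s * T w = T (s * w))
variable (hTgt : ∀ s w : Equiv.Perm (Fin k), IsAdjSwap s → invNum (s * w) < invNum w →
      T s * T w = (q - q⁻¹) • T w + T (s * w))

include hT1 hTlt hTgt in
lemma tauL {s : Equiv.Perm (Fin k)} (hs : IsAdjSwap s) (x : A) :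
    T.coord 1 (T s * x) = T.coord s x := by
  have key : (T.coord 1).comp (LinearMap.mulLeft ℂ (T s)) = T.coord s := by
    apply T.ext
    intro w
    simp only [LinearMap.comp_apply, LinearMap.mulLeft_apply]
    rw [coord_basis]
    rcases invNum_adjSwap_mul hs w with hcase | hcase
    · rw [hTlt s w hs (by omega), coord_basis]
      have hw : w ≠ s := by
        rintro rfl
        rw [adjSwap_sq hs, invNum_one, invNum_adjSwap hs] at hcase
        omega
      have hsw : s * w ≠ 1 := by
        intro hc
        rw [hc, invNum_one] at hcase
        omega
      rw [if_neg hsw, if_neg hw]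
    · rw [hTgt s w hs (by omega), map_add, map_smul, coord_basis, coord_basis]
      have hw1 : w ≠ 1 := by
        rintro rfl
        rw [mul_one, invNum_one, invNum_adjSwap hs] at hcase
        omega
      have : s * w = 1 ↔ w = s := by
        constructor
        · intro hc
          have := congrArg (fun z => s * z) hc
          simpa [← mul_assoc, adjSwap_sq hs] using this
        · rintro rfl; exact adjSwap_sq hs
      rw [if_neg hw1]
      by_cases hws : w = s
      · rw [if_pos hws, if_pos (this.2 hws)]; simp
      · rw [if_neg hws, if_neg (fun hc => hws (this.1 hc))]; simp
  exact LinearMap.congr_fun key x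

include hT1 hTlt hTgt in
lemma tauR {s : Equiv.Perm (Fin k)} (hs : IsAdjSwap s) (x : A) :
    T.coord 1 (x * T s) = T.coord s x := by
  have key : (T.coord 1).comp (LinearMap.mulRight ℂ (T s)) = T.coord s := by
    apply T.ext
    intro w
    simp only [LinearMap.comp_apply, LinearMap.mulRight_apply]
    rw [coord_basis]
    rcases rdichotomy hs w with hcase | hcase
    · rw [TR1 T hT1 hTlt hs w hcase, coord_basis]
      have hw : w ≠ s := by
        rintro rfl
        rw [adjSwap_sq hs, invNum_one, invNum_adjSwap hs] at hcase
        omega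
      have hws : w * s ≠ 1 := by
        intro hc
        rw [hc, invNum_one] at hcase
        omega
      rw [if_neg hws, if_neg hw]
    · rw [TR2 T hT1 hTlt hTgt hs w hcase, map_add, map_smul, coord_basis, coord_basis]
      have hw1 : w ≠ 1 := by
        rintro rfl
        rw [one_mul, invNum_one, invNum_adjSwap hs] at hcase
        omega
      have : w * s = 1 ↔ w = s := by
        constructor
        · intro hc
          have := congrArg (fun z => z * s) hc
          simpa [mul_assoc, adjSwap_sq hs] using this
        · rintro rfl; exact adjSwap_sq hs
      rw [if_neg hw1]
      by_cases hws : w = s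
      · rw [if_pos hws, if_pos (this.2 hws)]; simp
      · rw [if_neg hws, if_neg (fun hc => hws (this.1 hc))]; simp
  exact LinearMap.congr_fun key x

end Algebra2
end HeckeAux

namespace HeckeAux
section Algebra3
variable {k : ℕ} {q : ℂ} {A : Type} [Ring A] [Algebra ℂ A]
variable (T : Module.Basis (Equiv.Perm (Fin k)) ℂ A)
variable (hT1 : T 1 = 1)
variable (hTlt : ∀ s w : Equiv.Perm (Fin k), IsAdjSwap s → invNum w < invNum (s * w) →
      T s * T w = T (s * w))
variable (hTgt : ∀ s w : Equiv.Perm (Fin k), IsAdjSwap s → invNum (s * w) < invNum w →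
      T s * T w = (q - q⁻¹) • T w + T (s * w))

include hT1 hTlt hTgt in
lemma tauMain : ∀ (n : ℕ) (v u : Equiv.Perm (Fin k)), invNum v ≤ n →
    T.coord 1 (T u * T v) = if v = u⁻¹ then 1 else 0 := by
  intro n
  induction n with
  | zero =>
    intro v u hv
    have hv1 : v = 1 := invNum_eq_zero_iff.1 (Nat.le_zero.1 hv)
    subst hv1
    rw [hT1, mul_one, coord_basis]
    congr 1
    simp only [eq_iff_iff]
    constructor
    · rintro rfl; rw [inv_one]
    · intro h; rw [← inv_inv u, ← h, inv_one]
  | succ n ih =>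
    intro v u hv
    by_cases hv1 : v = 1
    · subst hv1
      rw [hT1, mul_one, coord_basis]
      congr 1
      simp only [eq_iff_iff]
      constructor
      · rintro rfl; simp
      · intro h; rw [← inv_inv u, ← h, inv_one]
    · -- right descent for v
      obtain ⟨s, hs, hdesc⟩ := exists_adjSwap_descent (show v⁻¹ ≠ 1 by simpa using hv1)
      set v' := v * s with hv'
      have hsv : s * v⁻¹ = v'⁻¹ := by
        rw [hv', mul_inv_rev, adjSwap_inv hs]
      have hlen : invNum v = invNum v' + 1 := by
        rw [← invNum_inv v, ← invNum_inv v', ← hsv]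
        exact hdesc
      have hv's : v' * s = v := by rw [hv', mul_assoc, adjSwap_sq hs, mul_one]
      have hTv : T v' * T s = T v := by
        rw [TR1 T hT1 hTlt hs v' (by rw [hv's]; omega), hv's]
      have hv'le : invNum v' ≤ n := by omega
      have step1 : T.coord 1 (T u * T v) = T.coord 1 ((T s * T u) * T v') := by
        rw [← hTv, ← mul_assoc, tauR T hT1 hTlt hTgt hs (T u * T v'),
          ← tauL T hT1 hTlt hTgt hs (T u * T v'), ← mul_assoc]
      rw [step1]
      have hiff : (v = u⁻¹) ↔ (v' = u⁻¹ * s) := by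
        constructor
        · rintro rfl; rw [hv']
        · intro h
          rw [← hv's, h, mul_assoc, adjSwap_sq hs, mul_one]
      rcases invNum_adjSwap_mul hs u with hcase | hcase
      · rw [hTlt s u hs (by omega), ih v' (s * u) hv'le]
        have : ((s * u)⁻¹ : Equiv.Perm (Fin k)) = u⁻¹ * s := by
          rw [mul_inv_rev, adjSwap_inv hs]
        rw [this]
        congr 1
        simp only [eq_iff_iff]
        exact hiff.symm
      · rw [hTgt s u hs (by omega), add_mul, smul_mul_assoc, map_add, map_smul,
          ih v' u hv'le, ih v' (s * u) hv'le]
        have hinv : ((s * u)⁻¹ : Equiv.Perm (Fin k)) = u⁻¹ * s := by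
          rw [mul_inv_rev, adjSwap_inv hs]
        have hne : v' ≠ u⁻¹ := by
          intro hc
          have h1 : invNum v' = invNum u := by rw [hc, invNum_inv]
          have h2 : invNum v = invNum (s * u) := by
            rw [← hv's, hc, ← invNum_inv (u⁻¹ * s), mul_inv_rev, inv_inv, adjSwap_inv hs]
          omega
        rw [if_neg hne, hinv, smul_zero, zero_add]
        congr 1
        simp only [eq_iff_iff]
        exact hiff.symm

include hT1 hTlt hTgt in
lemma tauDelta (u v : Equiv.Perm (Fin k)) :
    T.coord 1 (T u * T v) = if v = u⁻¹ then 1 else 0 :=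
  tauMain T hT1 hTlt hTgt (invNum v) v u le_rfl

include hT1 hTlt hTgt in
lemma tauTrace (a b : A) : T.coord 1 (a * b) = T.coord 1 (b * a) := by
  set f := (LinearMap.mul ℂ A).compr₂ (T.coord 1) with hf
  have key : f = f.flip := by
    apply T.ext; intro u
    apply T.ext; intro v
    simp only [hf, LinearMap.compr₂_apply, LinearMap.mul_apply', LinearMap.flip_apply]
    rw [tauDelta T hT1 hTlt hTgt, tauDelta T hT1 hTlt hTgt]
    congr 1
    simp only [eq_iff_iff]
    constructor
    · rintro rfl; rw [inv_inv]
    · rintro rfl; rw [inv_inv]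
  have := LinearMap.congr_fun (LinearMap.congr_fun key a) b
  simpa [hf] using this

include hT1 hTlt hTgt in
lemma expand (a : A) :
    a = ∑ u : Equiv.Perm (Fin k), (T.coord 1 (a * T u⁻¹)) • T u := by
  have hcoord : ∀ u : Equiv.Perm (Fin k),
      T.coord 1 (a * T u⁻¹) = T.repr a u := by
    intro u
    have key : (T.coord 1).comp (LinearMap.mulRight ℂ (T u⁻¹)) = T.coord u := by
      apply T.ext; intro v
      simp only [LinearMap.comp_apply, LinearMap.mulRight_apply]
      rw [tauDelta T hT1 hTlt hTgt, coord_basis]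
      congr 1
      simp only [eq_iff_iff]
      constructor
      · intro h
        have := congrArg (·⁻¹) h.symm
        simpa using this
      · rintro rfl; rfl
    have := LinearMap.congr_fun key a
    simpa [Module.Basis.coord_apply] using this
  calc a = ∑ u, T.repr a u • T u := (T.sum_repr a).symm
    _ = ∑ u : Equiv.Perm (Fin k), (T.coord 1 (a * T u⁻¹)) • T u := by
        refine Finset.sum_congr rfl fun u _ => ?_
        rw [hcoord u]

end Algebra3
end HeckeAux

/-- The element `t = ∑_{w ∈ S_k} T_w · T_{w⁻¹}` lies in the center of the Iwahori–Hecke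
algebra `A`. -/
theorem heckeAlgebra_sum_Tw_Twinv_central
    (k : ℕ) (hk : 1 ≤ k) (q : ℂ) (hq : q ≠ 0)
    (A : Type) [Ring A] [Algebra ℂ A]
    (T : Module.Basis (Equiv.Perm (Fin k)) ℂ A)
    (hT1 : T 1 = 1)
    (hTlt : ∀ s w : Equiv.Perm (Fin k), IsAdjSwap s → invNum w < invNum (s * w) →
      T s * T w = T (s * w))
    (hTgt : ∀ s w : Equiv.Perm (Fin k), IsAdjSwap s → invNum (s * w) < invNum w →
      T s * T w = (q - q⁻¹) • T w + T (s * w))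
    :
    ∀ x : A, (∑ w : Equiv.Perm (Fin k), T w * T w⁻¹) * x =
      x * (∑ w : Equiv.Perm (Fin k), T w * T w⁻¹) := by
  intro x
  have expandH := HeckeAux.expand T hT1 hTlt hTgt
  have traceH := HeckeAux.tauTrace T hT1 hTlt hTgt
  have lhs_eq : (∑ w : Equiv.Perm (Fin k), T w * T w⁻¹) * x =
      ∑ w : Equiv.Perm (Fin k), ∑ u : Equiv.Perm (Fin k),
        (T.coord 1 (T w⁻¹ * x * T u⁻¹)) • (T w * T u) := by
    rw [Finset.sum_mul]
    refine Finset.sum_congr rfl fun w _ => ?_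
    rw [mul_assoc]
    conv_lhs => rw [expandH (T w⁻¹ * x)]
    rw [Finset.mul_sum]
    refine Finset.sum_congr rfl fun u _ => ?_
    rw [mul_smul_comm]
  have rhs_eq : x * (∑ w : Equiv.Perm (Fin k), T w * T w⁻¹) =
      ∑ u : Equiv.Perm (Fin k), ∑ w : Equiv.Perm (Fin k),
        (T.coord 1 (x * T u * T w⁻¹)) • (T w * T u⁻¹) := by
    rw [Finset.mul_sum]
    refine Finset.sum_congr rfl fun u _ => ?_
    rw [← mul_assoc]
    conv_lhs => rw [expandH (x * T u)]
    rw [Finset.sum_mul]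
    refine Finset.sum_congr rfl fun w _ => ?_
    rw [smul_mul_assoc]
  rw [lhs_eq, rhs_eq]
  have reindex : (∑ u : Equiv.Perm (Fin k), ∑ w : Equiv.Perm (Fin k),
        (T.coord 1 (x * T u * T w⁻¹)) • (T w * T u⁻¹)) =
      ∑ u : Equiv.Perm (Fin k), ∑ w : Equiv.Perm (Fin k),
        (T.coord 1 (x * T u⁻¹ * T w⁻¹)) • (T w * T u) := by
    rw [← Equiv.sum_comp (Equiv.inv (Equiv.Perm (Fin k)))
      (fun u => ∑ w : Equiv.Perm (Fin k),
        (T.coord 1 (x * T u * T w⁻¹)) • (T w * T u⁻¹))]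
    refine Finset.sum_congr rfl fun u _ => ?_
    refine Finset.sum_congr rfl fun w _ => ?_
    simp only [Equiv.inv_apply, inv_inv]
  rw [reindex, Finset.sum_comm]
  refine Finset.sum_congr rfl fun w _ => ?_
  refine Finset.sum_congr rfl fun u _ => ?_
  congr 1
  rw [mul_assoc (T u⁻¹) x (T w⁻¹), traceH (T u⁻¹) (x * T w⁻¹)]
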